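/- arXiv:2605.20120 — 2 statements merged into one kernel-verified Lean document; each statement's English description precedes it below -/
import Mathlib

section
/- Let n be a positive integer, let a_1, …, a_n be distinct positive integers, and let M be a set of n − 1 positive integers such that a_1 + ⋯ + a_n ∉ M. Then there exists a permutation σ of {1, …, n} such that for every k with 1 ≤ k ≤ n, the partial sum a_{σ(1)} + ⋯ + a_{σ(k)} does not belong to M. -/
namespace GrasshopperAux

def Ok (M : Finset ℕ) : ℕ → List ℕ → Prop
  | _, [] => True
  | p, x :: t => (p + x ∉ M) ∧ Ok M (p + x) t

@[simp] lemma ok_nil (M : Finset ℕ) (p : ℕ) : Ok M p [] := trivial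

@[simp] lemma ok_cons {M : Finset ℕ} {p x : ℕ} {t : List ℕ} :
    Ok M p (x :: t) ↔ (p + x ∉ M) ∧ Ok M (p + x) t := Iff.rfl

lemma ok_append {M : Finset ℕ} {u v : List ℕ} : ∀ {p : ℕ},
    Ok M p (u ++ v) ↔ Ok M p u ∧ Ok M (p + u.sum) v := by
  induction u with
  | nil => intro p; simp
  | cons x t ih =>
    intro p
    simp only [List.cons_append, ok_cons, ih, List.sum_cons, and_assoc]
    constructor
    · rintro ⟨h1, h2, h3⟩; exact ⟨h1, h2, by rwa [add_assoc] at h3⟩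
    · rintro ⟨h1, h2, h3⟩; exact ⟨h1, h2, by rwa [← add_assoc] at h3⟩

lemma ok_of_lt {M : Finset ℕ} {l : List ℕ} : ∀ {p : ℕ}, (∀ m ∈ M, m < p) → Ok M p l := by
  induction l with
  | nil => intro _ _; trivial
  | cons x t ih =>
    intro p hp
    refine ⟨fun hmem => ?_, ih fun m hm => lt_of_lt_of_le (hp m hm) (by omega)⟩
    exact absurd (hp _ hmem) (by omega)

lemma ok_strengthen {M M' : Finset ℕ} {l : List ℕ} : ∀ {p : ℕ},
    Ok M' p l → (∀ t, t ≤ p + l.sum → t ∈ M → t ∈ M') → Ok M p l := by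
  induction l with
  | nil => intro _ _ _; trivial
  | cons x t ih =>
    rintro p ⟨h1, h2⟩ h
    simp only [List.sum_cons] at h
    refine ⟨fun hmem => h1 (h _ (by omega) hmem), ih h2 fun s hs hsM => h s (by omega) hsM⟩

lemma ok_last {M : Finset ℕ} {l : List ℕ} : ∀ {p : ℕ},
    Ok M p l → l ≠ [] → p + l.sum ∉ M := by
  induction l with
  | nil => intro _ _ h; exact absurd rfl h
  | cons x t ih =>
    rintro p ⟨h1, h2⟩ _
    rcases eq_or_ne t [] with rfl | ht
    · simpa using h1
    · have := ih h2 ht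
      simpa [add_assoc] using this

lemma ok_hit {M : Finset ℕ} {m : ℕ} {l : List ℕ} : ∀ {p : ℕ},
    Ok (M.erase m) p l →
    Ok M p l ∨ ∃ u y w, l = u ++ y :: w ∧ p + u.sum + y = m := by
  induction l with
  | nil => intro _ _; left; trivial
  | cons x t ih =>
    rintro p ⟨h1, h2⟩
    by_cases hxm : p + x = m
    · exact Or.inr ⟨[], x, t, rfl, by simpa using hxm⟩
    · have hx : p + x ∉ M := fun hmem => h1 (Finset.mem_erase.mpr ⟨hxm, hmem⟩)
      rcases ih h2 with h | ⟨u, y, w, rfl, hsum⟩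
      · exact Or.inl ⟨hx, h⟩
      · exact Or.inr ⟨x :: u, y, w, rfl, by simp only [List.sum_cons]; omega⟩

lemma ok_take {M : Finset ℕ} {l : List ℕ} : ∀ {p : ℕ},
    Ok M p l → ∀ m < l.length, p + (l.take (m + 1)).sum ∉ M := by
  induction l with
  | nil => intro _ _ m hm; simp at hm
  | cons x t ih =>
    rintro p ⟨h1, h2⟩ m hm
    cases m with
    | zero => simpa using h1
    | succ m =>
      have := ih h2 m (by simpa using hm)
      simpa [add_assoc] using this

lemma perm_toFinset {l₁ l₂ : List ℕ} (h : List.Perm l₁ l₂) : l₁.toFinset = l₂.toFinset := by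
  ext x; simp [List.mem_toFinset, h.mem_iff]

/-- assembling `u ++ d :: w` from `b = u ++ w`, a nodup enumeration of `B = A.erase d`. -/
lemma build {A B : Finset ℕ} {d : ℕ} (hins : insert d B = A) (hdB : d ∉ B)
    {b u w : List ℕ} (hbF : b.toFinset = B) (hbnd : b.Nodup) (hb : b = u ++ w) :
    (u ++ d :: w).toFinset = A ∧ (u ++ d :: w).Nodup := by
  have hperm : List.Perm (u ++ d :: w) (d :: b) := by rw [hb]; exact List.perm_middle
  have hdb : d ∉ b := by rw [← List.mem_toFinset, hbF]; exact hdB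
  constructor
  · rw [perm_toFinset hperm, List.toFinset_cons, hbF, hins]
  · exact hperm.nodup_iff.mpr (List.nodup_cons.mpr ⟨hdb, hbnd⟩)

theorem core (n : ℕ) : ∀ (A M : Finset ℕ), A.card = n → M.card < n →
    (∀ x ∈ A, 0 < x) → (∑ x ∈ A, x) ∉ M →
    ∃ l : List ℕ, l.toFinset = A ∧ l.Nodup ∧ Ok M 0 l := by
  induction n using Nat.strong_induction_on with
  | _ n IH =>
  intro A M hA hM hpos hs
  rcases eq_or_ne M ∅ with rfl | hMne
  · exact ⟨A.toList, A.toList_toFinset, A.nodup_toList, ok_of_lt (by simp)⟩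
  have hMne' : M.Nonempty := Finset.nonempty_iff_ne_empty.mpr hMne
  have hMcard1 : 1 ≤ M.card := Finset.card_pos.mpr hMne'
  have hn2 : 2 ≤ n := by omega
  have hAne : A.Nonempty := by rw [← Finset.card_pos, hA]; omega
  set d := A.max' hAne with hd_def
  have hdA : d ∈ A := A.max'_mem hAne
  set B := A.erase d with hB_def
  have hdB : d ∉ B := Finset.notMem_erase d A
  have hins : insert d B = A := Finset.insert_erase hdA
  have hBcard : B.card = n - 1 := by rw [hB_def, Finset.card_erase_of_mem hdA, hA]
  have hBpos : ∀ x ∈ B, 0 < x := fun x hx => hpos x (Finset.mem_of_mem_erase hx)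
  have hBlt : ∀ x ∈ B, x < d := by
    intro x hx
    rcases Finset.mem_erase.mp hx with ⟨hne, hxA⟩
    exact lt_of_le_of_ne (A.le_max' x hxA) hne
  set S := ∑ x ∈ A, x with hS_def
  set T := ∑ x ∈ B, x with hT_def
  have hTd : T + d = S := Finset.sum_erase_add A (fun x => x) hdA
  have hxT : ∀ x ∈ B, x ≤ T :=
    fun x hx => Finset.single_le_sum (f := fun i => i) (fun i _ => Nat.zero_le i) hx
  -- helper to get b.sum = T
  have sum_of : ∀ b : List ℕ, b.toFinset = B → b.Nodup → b.sum = T := by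
    intro b hbF hbnd
    have h := List.sum_toFinset (fun i => i) hbnd
    rw [hbF] at h
    rw [hT_def, h]
    simp
  by_cases hT : T ∈ M
  · -- Case 3 : T ∈ M
    set D := B.filter (fun x => S - x ∈ M) with hD_def
    set M' := (M.filter (· < T)) ∪ D.image (fun x => T - x) with hM'_def
    have hDcard : D.card ≤ (M.filter (fun m => T < m)).card := by
      apply Finset.card_le_card_of_injOn (fun x => S - x)
      · intro x hx
        rcases Finset.mem_filter.mp hx with ⟨hxB, hxM⟩
        refine Finset.mem_filter.mpr ⟨hxM, ?_⟩
        have h1 := hBlt x hxB; have h2 := hxT x hxB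
        show T < S - x
        omega
      · intro x hx y hy hxy
        have h2 := hxT x (Finset.mem_filter.mp hx).1
        have h3 := hxT y (Finset.mem_filter.mp hy).1
        simp only at hxy
        omega
    have hM'card : M'.card < n - 1 := by
      have hdisj : Disjoint (M.filter (· < T)) (M.filter (fun m => T < m)) := by
        rw [Finset.disjoint_left]
        intro x h1 h2
        have := (Finset.mem_filter.mp h1).2
        have := (Finset.mem_filter.mp h2).2
        omega
      have hTnot : T ∉ (M.filter (· < T)) ∪ (M.filter (fun m => T < m)) := by
        intro h
        rcases Finset.mem_union.mp h with h | h
        · exact absurd (Finset.mem_filter.mp h).2 (lt_irrefl T)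
        · exact absurd (Finset.mem_filter.mp h).2 (lt_irrefl T)
      have hsub : insert T ((M.filter (· < T)) ∪ (M.filter (fun m => T < m))) ⊆ M := by
        intro x hx
        rcases Finset.mem_insert.mp hx with rfl | hx
        · exact hT
        · rcases Finset.mem_union.mp hx with h | h
          · exact (Finset.mem_filter.mp h).1
          · exact (Finset.mem_filter.mp h).1
      have h1 := Finset.card_le_card hsub
      rw [Finset.card_insert_of_notMem hTnot, Finset.card_union_of_disjoint hdisj] at h1
      have h2 := Finset.card_union_le (M.filter (· < T)) (D.image (fun x => T - x))
      have h3 := Finset.card_image_le (s := D) (f := fun x => T - x)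
      have h4 : M'.card = (Finset.filter (fun x => x < T) M ∪ Finset.image (fun x => T - x) D).card := by
        rw [hM'_def]
      omega
    have hTM' : T ∉ M' := by
      intro h
      rcases Finset.mem_union.mp h with h | h
      · exact absurd (Finset.mem_filter.mp h).2 (lt_irrefl T)
      · rcases Finset.mem_image.mp h with ⟨x, hxD, hxe⟩
        have h1 := hBpos x (Finset.mem_filter.mp hxD).1
        have h2 := hxT x (Finset.mem_filter.mp hxD).1
        omega
    obtain ⟨b, hbF, hbnd, hbok⟩ := IH (n-1) (by omega) B M' hBcard hM'card hBpos hTM'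
    have hbsum := sum_of b hbF hbnd
    have hbne : b ≠ [] := by
      intro h
      rw [h] at hbF
      have : B.card = 0 := by rw [← hbF]; simp
      omega
    set y := b.getLast hbne with hy_def
    set q := b.dropLast with hq_def
    have hbqy : q ++ [y] = b := List.dropLast_append_getLast hbne
    have hyB : y ∈ B := by
      rw [← hbF, List.mem_toFinset]
      exact List.getLast_mem hbne
    have hypos := hBpos y hyB
    have hqok : Ok M' 0 q ∧ Ok M' (0 + q.sum) [y] := ok_append.mp (by rw [hbqy]; exact hbok)
    have hqsum : q.sum + y = T := by
      have h : (q ++ [y]).sum = b.sum := by rw [hbqy]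
      simp only [List.sum_append, List.sum_cons, List.sum_nil] at h
      omega
    obtain ⟨hF, hnd⟩ := build hins hdB hbF hbnd hbqy.symm
    refine ⟨q ++ d :: [y], hF, hnd, ?_⟩
    apply ok_append.mpr
    constructor
    · -- Ok M 0 q
      apply ok_strengthen hqok.1
      intro t ht htM
      apply Finset.mem_union_left
      refine Finset.mem_filter.mpr ⟨htM, ?_⟩
      simp only [zero_add] at ht
      omega
    · -- Ok M (0 + q.sum) [d, y]
      have hP2 : 0 + q.sum + d + y ∉ M := by
        have he : 0 + q.sum + d + y = S := by omega
        rw [he]; exact hs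
      refine ⟨?_, hP2, trivial⟩
      intro hc
      have hyD : y ∈ D := by
        refine Finset.mem_filter.mpr ⟨hyB, ?_⟩
        have he : S - y = q.sum + d := by omega
        rw [he]
        simpa using hc
      have hqM' : q.sum ∈ M' := by
        apply Finset.mem_union_right
        exact Finset.mem_image.mpr ⟨y, hyD, by omega⟩
      rcases eq_or_ne q [] with hq | hqne
      · -- n = 2 degenerate case
        rw [hq] at hqsum
        simp only [List.sum_nil, zero_add] at hqsum
        -- hqsum : y = T
        have hb1 : b = [y] := by rw [← hbqy, hq]; rfl
        have hBy : B = {y} := by rw [← hbF, hb1]; simp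
        have hn2' : n = 2 := by
          have : B.card = 1 := by rw [hBy]; simp
          omega
        have hdM : d ∈ M := by
          rw [hq] at hc
          simpa using hc
        have hcard1 : M.card ≤ 1 := by omega
        have hdT : d = T := Finset.card_le_one.mp hcard1 _ hdM _ hT
        have : y ≠ d := Finset.ne_of_mem_erase (hB_def ▸ hyB)
        omega
      · exact absurd hqM' (by simpa using ok_last hqok.1 hqne)
  · -- T ∉ M
    by_cases hgt : ∃ m ∈ M, T < m
    · -- Case 1
      obtain ⟨m₀, hm₀M, hm₀T⟩ := hgt
      set M₁ := M.filter (· < T) with hM₁_def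
      have hM₁sub : M₁ ⊆ M.erase m₀ := by
        intro x hx
        rcases Finset.mem_filter.mp hx with ⟨hxM, hxT'⟩
        exact Finset.mem_erase.mpr ⟨by omega, hxM⟩
      have hM₁card : M₁.card < n - 1 := by
        have h1 := Finset.card_le_card hM₁sub
        have h2 := Finset.card_erase_of_mem hm₀M
        omega
      obtain ⟨b, hbF, hbnd, hbok⟩ := IH (n-1) (by omega) B M₁ hBcard hM₁card hBpos
        (fun hc => absurd (Finset.mem_filter.mp hc).2 (lt_irrefl T))
      have hbsum := sum_of b hbF hbnd
      obtain ⟨hF, hnd⟩ := build hins hdB hbF hbnd (List.append_nil b).symm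
      refine ⟨b ++ d :: [], hF, hnd, ?_⟩
      apply ok_append.mpr
      constructor
      · apply ok_strengthen hbok
        intro t ht htM
        refine Finset.mem_filter.mpr ⟨htM, ?_⟩
        simp only [zero_add] at ht
        rcases lt_or_eq_of_le (ht.trans_eq hbsum) with h | h
        · exact h
        · exact absurd (h ▸ htM) hT
      · refine ⟨?_, trivial⟩
        have he : 0 + b.sum + d = S := by omega
        rw [he]; exact hs
    · -- Case 2
      push_neg at hgt
      set m' := M.max' hMne' with hm'_def
      have hm'M : m' ∈ M := M.max'_mem hMne'
      have hm'max : ∀ m ∈ M, m ≤ m' := fun m hm => M.le_max' m hm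
      have hm'T : m' < T := by
        rcases lt_or_eq_of_le (hgt m' hm'M) with h | h
        · exact h
        · exact absurd (h ▸ hm'M) hT
      set M₂ := M.erase m' with hM₂_def
      have hM₂card : M₂.card < n - 1 := by
        rw [hM₂_def, Finset.card_erase_of_mem hm'M]
        omega
      obtain ⟨b, hbF, hbnd, hbok⟩ := IH (n-1) (by omega) B M₂ hBcard hM₂card hBpos
        (fun hc => hT (Finset.mem_of_mem_erase hc))
      have hbsum := sum_of b hbF hbnd
      rcases ok_hit hbok with hok | ⟨u, y, w, hbuw, hhit⟩
      · -- no hit of m'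
        obtain ⟨hF, hnd⟩ := build hins hdB hbF hbnd (List.append_nil b).symm
        refine ⟨b ++ d :: [], hF, hnd, ?_⟩
        apply ok_append.mpr
        refine ⟨hok, ?_, trivial⟩
        have he : 0 + b.sum + d = S := by omega
        rw [he]; exact hs
      · -- hit of m'
        have hyB : y ∈ B := by
          rw [← hbF, List.mem_toFinset, hbuw]
          simp
        have hyd : y < d := hBlt y hyB
        have hypos : 0 < y := hBpos y hyB
        have hhit' : u.sum + y = m' := by simpa using hhit
        obtain ⟨hF, hnd⟩ := build hins hdB hbF hbnd hbuw
        refine ⟨u ++ d :: (y :: w), hF, hnd, ?_⟩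
        apply ok_append.mpr
        constructor
        · -- Ok M 0 u
          have huok : Ok M₂ 0 u := (ok_append.mp (hbuw ▸ hbok)).1
          apply ok_strengthen huok
          intro t ht htM
          refine Finset.mem_erase.mpr ⟨?_, htM⟩
          simp only [zero_add] at ht
          omega
        · -- Ok M (0 + u.sum) (d :: y :: w)
          refine ⟨?_, ok_of_lt ?_⟩
          · intro hc
            have := hm'max _ hc
            omega
          · intro m hm
            have := hm'max m hm
            omega



lemma sum_Iic_get {n : ℕ} (l : List ℕ) (hlen : l.length = n) :
    ∀ (m : ℕ) (hm : m < n),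
      ∑ j ∈ Finset.Iic (⟨m, hm⟩ : Fin n), l.get (Fin.cast hlen.symm j) = (l.take (m + 1)).sum := by
  intro m
  induction m with
  | zero =>
    intro hm
    have h0 : Finset.Iic (⟨0, hm⟩ : Fin n) = {⟨0, hm⟩} := by
      ext j
      simp [Finset.mem_Iic, Fin.le_def, Fin.ext_iff]
    rw [h0, Finset.sum_singleton, List.sum_take_succ l 0 (by omega)]
    simp
  | succ m ih =>
    intro hm
    have hm' : m < n := by omega
    have hins : Finset.Iic (⟨m + 1, hm⟩ : Fin n) = insert ⟨m + 1, hm⟩ (Finset.Iic ⟨m, hm'⟩) := by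
      ext j
      simp only [Finset.mem_Iic, Finset.mem_insert, Fin.le_def, Fin.ext_iff]
      omega
    have hnot : (⟨m + 1, hm⟩ : Fin n) ∉ Finset.Iic (⟨m, hm'⟩ : Fin n) := by
      simp [Finset.mem_Iic, Fin.le_def]
    rw [hins, Finset.sum_insert hnot, ih hm', List.sum_take_succ l (m + 1) (by omega)]
    have hg : l.get (Fin.cast hlen.symm ⟨m + 1, hm⟩) = l.get ⟨m + 1, by omega⟩ := rfl
    rw [hg]
    exact add_comm _ _


end GrasshopperAux

open GrasshopperAux

/-- The Grasshopper problem (IMO 2009 Problem 6): given `n` distinct positive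
integers `a i` and a set `M` of `n - 1` positive integers not containing the
total sum, some ordering of the jumps avoids all points of `M` at every
partial sum. -/
theorem grasshopper_imo2009_p6 (n : ℕ) (hn : 0 < n) (a : Fin n → ℕ)
    (ha_pos : ∀ i, 0 < a i) (ha_inj : Function.Injective a)
    (M : Finset ℕ) (hM_card : M.card = n - 1) (hM_pos : ∀ m ∈ M, 0 < m)
    (hS : (∑ i, a i) ∉ M) :
    ∃ σ : Equiv.Perm (Fin n), ∀ k : Fin n, (∑ j ∈ Finset.Iic k, a (σ j)) ∉ M := by
  classical
  set A := Finset.image a Finset.univ with hA_def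
  have hAcard : A.card = n := by
    rw [hA_def, Finset.card_image_of_injective _ ha_inj, Finset.card_univ, Fintype.card_fin]
  have hApos : ∀ x ∈ A, 0 < x := by
    intro x hx
    rcases Finset.mem_image.mp hx with ⟨i, _, rfl⟩
    exact ha_pos i
  have hAsum : ∑ x ∈ A, x = ∑ i, a i := Finset.sum_image (fun i _ j _ h => ha_inj h)
  obtain ⟨l, hlF, hlnd, hlok⟩ := core n A M hAcard (by omega) hApos (by rw [hAsum]; exact hS)
  have hlen : l.length = n := by rw [← List.toFinset_card_of_nodup hlnd, hlF, hAcard]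
  have hget : ∀ j : Fin n, ∃ i : Fin n, a i = l.get (Fin.cast hlen.symm j) := by
    intro j
    have hmem : l.get (Fin.cast hlen.symm j) ∈ A := by
      rw [← hlF]
      exact List.mem_toFinset.mpr (List.get_mem l (Fin.cast hlen.symm j))
    rcases Finset.mem_image.mp hmem with ⟨i, _, hi⟩
    exact ⟨i, hi⟩
  choose f hf using hget
  have hfinj : Function.Injective f := by
    intro j j' h
    have hgg : l.get (Fin.cast hlen.symm j) = l.get (Fin.cast hlen.symm j') := by
      rw [← hf j, ← hf j', h]
    have h2 := (List.nodup_iff_injective_get.mp hlnd) hgg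
    have h3 := congrArg Fin.val h2
    exact Fin.ext h3
  refine ⟨Equiv.ofBijective f (Finite.injective_iff_bijective.mp hfinj), ?_⟩
  intro k
  have hk : (k : ℕ) < l.length := by rw [hlen]; exact k.isLt
  have hres := ok_take hlok k hk
  rw [zero_add] at hres
  have hsum : ∑ j ∈ Finset.Iic k, a (Equiv.ofBijective f (Finite.injective_iff_bijective.mp hfinj) j)
      = (l.take ((k : ℕ) + 1)).sum := by
    have h1 : ∀ j ∈ Finset.Iic k, a (Equiv.ofBijective f (Finite.injective_iff_bijective.mp hfinj) j)
        = l.get (Fin.cast hlen.symm j) := fun j _ => hf j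
    rw [Finset.sum_congr rfl h1]
    have := sum_Iic_get l hlen k.1 k.2
    simpa using this
  rw [hsum]
  exact hres
end

section
/- Let n : ℕ, let a : Fin n → ℕ satisfy 0 < a i for every i and be injective, and let M : Finset ℕ satisfy M.card < n and (∑ i, a i) ∉ M. Then there exists a permutation σ of Fin n such that for every k : Fin n, the partial sum PS a σ k = ∑_{j ∈ Finset.Iic k} a (σ j) does not belong to M. -/
/-- Partial sum: the landing position after the jumps in positions `0, …, k`. -/
def PS {n : ℕ} (a : Fin n → ℕ) (σ : Equiv.Perm (Fin n)) (k : Fin n) : ℕ :=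
  ∑ j ∈ Finset.Iic k, a (σ j)

namespace Grasshopper
open List

def psums : List ℕ → List ℕ
  | [] => []
  | a :: t => a :: (psums t).map (a + ·)

@[simp] lemma psums_nil : psums [] = [] := rfl
@[simp] lemma psums_cons (a : ℕ) (t : List ℕ) :
    psums (a :: t) = a :: (psums t).map (a + ·) := rfl

lemma psums_append (l r : List ℕ) :
    psums (l ++ r) = psums l ++ (psums r).map (l.sum + ·) := by
  induction l with
  | nil => simp
  | cons a t ih => simp [ih, List.map_map, Function.comp_def, Nat.add_assoc]

lemma mem_psums_le_sum {p : ℕ} {l : List ℕ} (h : p ∈ psums l) : p ≤ l.sum := by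
  induction l generalizing p with
  | nil => simp at h
  | cons a t ih =>
      simp at h
      rcases h with rfl | ⟨x, hx, rfl⟩
      · simp
      · simpa using ih hx

lemma exists_split {p : ℕ} {l : List ℕ} (h : p ∈ psums l) :
    ∃ l₁ e l₂, l = l₁ ++ e :: l₂ ∧ p = l₁.sum + e := by
  induction l generalizing p with
  | nil => simp at h
  | cons a t ih =>
      simp at h
      rcases h with rfl | ⟨x, hx, rfl⟩
      · exact ⟨[], p, t, by simp⟩
      · obtain ⟨l₁, e, l₂, rfl, rfl⟩ := ih hx
        exact ⟨a :: l₁, e, l₂, by simp, by simp [Nat.add_assoc]⟩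

lemma take_sum_mem {l : List ℕ} {k : ℕ} (h : k < l.length) :
    (l.take (k + 1)).sum ∈ psums l := by
  induction l generalizing k with
  | nil => simp at h
  | cons a t ih =>
      cases k with
      | zero => simp
      | succ k =>
          simp only [List.take_succ_cons, List.sum_cons, psums_cons]
          exact List.mem_cons_of_mem _ (List.mem_map_of_mem (ih (by simpa using h)))

lemma list_main : ∀ (n : ℕ) (l : List ℕ) (M : Finset ℕ), l.length = n → l.Nodup →
    (∀ x ∈ l, 0 < x) → M.card < n → l.sum ∉ M →
    ∃ l', l'.Perm l ∧ ∀ p ∈ psums l', p ∉ M := by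
  intro n
  induction n using Nat.strong_induction_on with
  | _ n ih =>
  intro l M hlen hnd hpos hcard hsum
  by_cases hM : M = ∅
  · exact ⟨l, List.Perm.refl l, by simp [hM]⟩
  have hMne : M.Nonempty := Finset.nonempty_iff_ne_empty.mpr hM
  have hM1 : 1 ≤ M.card := Finset.card_pos.mpr hMne
  rcases lt_or_eq_of_le (Nat.succ_le_of_lt hcard) with hcase | hcase
  · -- Case 1: M.card + 1 < n : drop a free last jump
    have hex : ∃ g ∈ l, l.sum - g ∉ M := by
      by_contra hco
      push_neg at hco
      have hsub : l.toFinset.image (fun x => l.sum - x) ⊆ M := by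
        intro y hy
        simp only [Finset.mem_image, List.mem_toFinset] at hy
        obtain ⟨x, hx, rfl⟩ := hy
        exact hco x hx
      have hinj : Set.InjOn (fun x => l.sum - x) l.toFinset := by
        intro x hx y hy hxy
        have hx' : x ≤ l.sum :=
          List.single_le_sum (fun _ _ => Nat.zero_le _) _ (List.mem_toFinset.mp hx)
        have hy' : y ≤ l.sum :=
          List.single_le_sum (fun _ _ => Nat.zero_le _) _ (List.mem_toFinset.mp hy)
        simp only at hxy
        omega
      have hc1 : (l.toFinset.image (fun x => l.sum - x)).card = n := by
        rw [Finset.card_image_of_injOn hinj, List.toFinset_card_of_nodup hnd, hlen]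
      have := Finset.card_le_card hsub
      omega
    obtain ⟨g, hg, hgM⟩ := hex
    have hsumeq : l.sum = g + (l.erase g).sum := by
      simpa using (List.perm_cons_erase hg).sum_eq
    have hgle : g ≤ l.sum := List.single_le_sum (fun _ _ => Nat.zero_le _) _ hg
    set t := (l.erase g).sum with ht
    have htM : t ∉ M := by
      have : l.sum - g = t := by omega
      rwa [this] at hgM
    obtain ⟨r, hr, hok⟩ := ih (n-1) (by omega) (l.erase g) (M.filter (· < t))
      (by rw [List.length_erase_of_mem hg, hlen])
      (hnd.erase g) (fun x hx => hpos x (List.mem_of_mem_erase hx))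
      (by have := Finset.card_filter_le M (· < t); omega)
      (by simp [Finset.mem_filter]; exact fun _ => ht.le)
    have hrs : r.sum = t := hr.sum_eq
    refine ⟨r ++ [g], ?_, ?_⟩
    · calc r ++ [g] ~ [g] ++ r := List.perm_append_comm
        _ = g :: r := rfl
        _ ~ g :: l.erase g := hr.cons g
        _ ~ l := (List.perm_cons_erase hg).symm
    · intro p hp
      rw [psums_append] at hp
      rcases List.mem_append.mp hp with hp | hp
      · have hple : p ≤ t := hrs ▸ mem_psums_le_sum hp
        intro hpM
        rcases eq_or_lt_of_le hple with rfl | hplt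
        · exact htM hpM
        · exact hok p hp (Finset.mem_filter.mpr ⟨hpM, hplt⟩)
      · rcases List.mem_map.mp hp with ⟨x, hx, rfl⟩
        have hx' : x = g := by simpa [psums] using hx
        intro hpM
        apply hsum
        have h' : l.sum = r.sum + x := by omega
        rwa [h']
  · -- Case 2: M.card + 1 = n
    have hlne : l ≠ [] := by
      intro h; rw [h] at hlen; simp at hlen; omega
    obtain ⟨x0, hx0⟩ := List.exists_mem_of_ne_nil l hlne
    have hlF : l.toFinset.Nonempty := ⟨x0, List.mem_toFinset.mpr hx0⟩
    set g := l.toFinset.max' hlF with hgdef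
    have hg : g ∈ l := List.mem_toFinset.mp (Finset.max'_mem _ _)
    have hgmax : ∀ x ∈ l, x ≤ g := fun x hx => Finset.le_max' _ x (List.mem_toFinset.mpr hx)
    have hlt : ∀ x ∈ l.erase g, x < g := by
      intro x hx
      have h1 := (hnd.mem_erase_iff.mp hx)
      exact lt_of_le_of_ne (hgmax x h1.2) h1.1
    have hsumeq : l.sum = g + (l.erase g).sum := by
      simpa using (List.perm_cons_erase hg).sum_eq
    set t := (l.erase g).sum with ht
    set d := M.max' hMne with hddef
    have hdM : d ∈ M := Finset.max'_mem _ _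
    have hdmax : ∀ m ∈ M, m ≤ d := fun m hm => Finset.le_max' _ m hm
    by_cases h2 : t ∈ M.erase d
    · -- Case 2b
      have htM : t ∈ M := (Finset.mem_erase.mp h2).2
      have htd : t ≠ d := (Finset.mem_erase.mp h2).1
      have htd' : t < d := lt_of_le_of_ne (hdmax t htM) htd
      have hM2 : 2 ≤ M.card := Finset.one_lt_card.mpr ⟨t, htM, d, hdM, htd⟩
      set A := M.filter (· < t) with hA
      set B := M.filter (t < ·) with hB
      have hdisj : Disjoint A B := by
        rw [Finset.disjoint_left]
        intro x hx hx'
        have h1 := (Finset.mem_filter.mp hx).2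
        have h2' := (Finset.mem_filter.mp hx').2
        omega
      have hABsub : A ∪ B ⊆ M.erase t := by
        intro x hx
        rcases Finset.mem_union.mp hx with hx | hx <;>
          · have := Finset.mem_filter.mp hx
            exact Finset.mem_erase.mpr ⟨by omega, this.1⟩
      have hABcard : A.card + B.card ≤ M.card - 1 := by
        have h1 := Finset.card_le_card hABsub
        rw [Finset.card_union_of_disjoint hdisj] at h1
        rw [Finset.card_erase_of_mem htM] at h1
        exact h1
      have hdB : d ∈ B := Finset.mem_filter.mpr ⟨hdM, htd'⟩
      have hB1 : 1 ≤ B.card := Finset.card_pos.mpr ⟨d, hdB⟩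
      -- choose β
      set C := (l.erase g).toFinset with hC
      have hCcard : C.card = n - 1 := by
        rw [List.toFinset_card_of_nodup (hnd.erase g), List.length_erase_of_mem hg, hlen]
      set bad1 := C.filter (fun β => l.sum - β ∈ M) with hbad1
      set bad2 := C.filter (fun β => t - β ∈ M) with hbad2
      have hmemC : ∀ β ∈ C, β ≤ t ∧ β < g ∧ 0 < β := by
        intro β hβ
        have hβe : β ∈ l.erase g := List.mem_toFinset.mp hβ
        exact ⟨List.single_le_sum (fun _ _ => Nat.zero_le _) _ hβe, hlt β hβe,
          hpos β (List.mem_of_mem_erase hβe)⟩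
      have hb1 : bad1.card ≤ B.card := by
        apply Finset.card_le_card_of_injOn (fun β => l.sum - β)
        · intro β hβ
          obtain ⟨hβC, hβM⟩ := Finset.mem_filter.mp hβ
          obtain ⟨h1, h2', h3⟩ := hmemC β hβC
          exact Finset.mem_filter.mpr ⟨hβM, by dsimp only; omega⟩
        · intro x hx y hy hxy
          obtain ⟨h1, _, _⟩ := hmemC x (Finset.mem_filter.mp hx).1
          obtain ⟨h1', _, _⟩ := hmemC y (Finset.mem_filter.mp hy).1
          simp only at hxy
          omega
      have hb2 : bad2.card ≤ A.card := by
        apply Finset.card_le_card_of_injOn (fun β => t - β)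
        · intro β hβ
          obtain ⟨hβC, hβM⟩ := Finset.mem_filter.mp hβ
          obtain ⟨h1, h2', h3⟩ := hmemC β hβC
          exact Finset.mem_filter.mpr ⟨hβM, by dsimp only; omega⟩
        · intro x hx y hy hxy
          obtain ⟨h1, _, _⟩ := hmemC x (Finset.mem_filter.mp hx).1
          obtain ⟨h1', _, _⟩ := hmemC y (Finset.mem_filter.mp hy).1
          simp only at hxy
          omega
      have hnotsub : ¬ C ⊆ bad1 ∪ bad2 := by
        intro hsub
        have h1 := Finset.card_le_card hsub
        have h2' := Finset.card_union_le bad1 bad2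
        omega
      obtain ⟨β, hβC, hβbad⟩ := Finset.not_subset.mp hnotsub
      have hβe : β ∈ l.erase g := List.mem_toFinset.mp hβC
      obtain ⟨hβt, hβg, hβpos⟩ := hmemC β hβC
      have hβs : l.sum - β ∉ M := fun h =>
        hβbad (Finset.mem_union_left _ (Finset.mem_filter.mpr ⟨hβC, h⟩))
      have hβtM : t - β ∉ M := fun h =>
        hβbad (Finset.mem_union_right _ (Finset.mem_filter.mpr ⟨hβC, h⟩))
      have hsumeq2 : t = β + ((l.erase g).erase β).sum := by
        simpa using (List.perm_cons_erase hβe).sum_eq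
      set u := ((l.erase g).erase β).sum with hu
      obtain ⟨r, hr, hok⟩ := ih (n-2) (by omega) ((l.erase g).erase β) (M.filter (· < u))
        (by rw [List.length_erase_of_mem hβe, List.length_erase_of_mem hg, hlen]; omega)
        ((hnd.erase g).erase β)
        (fun x hx => hpos x (List.mem_of_mem_erase (List.mem_of_mem_erase hx)))
        (by
          have hsubA : M.filter (· < u) ⊆ A := by
            intro x hx
            obtain ⟨h1, h2'⟩ := Finset.mem_filter.mp hx
            exact Finset.mem_filter.mpr ⟨h1, by omega⟩
          have := Finset.card_le_card hsubA
          omega)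
        (by simp [Finset.mem_filter]; exact fun _ => hu.le)
      have hrs : r.sum = u := hr.sum_eq
      refine ⟨r ++ [g, β], ?_, ?_⟩
      · calc r ++ [g, β] ~ [g, β] ++ r := List.perm_append_comm
          _ = g :: β :: r := rfl
          _ ~ g :: β :: (l.erase g).erase β := ((hr.cons β).cons g)
          _ ~ g :: l.erase g := ((List.perm_cons_erase hβe).symm.cons g)
          _ ~ l := (List.perm_cons_erase hg).symm
      · intro p hp
        rw [psums_append] at hp
        rcases List.mem_append.mp hp with hp | hp
        · intro hpM
          have hple : p ≤ u := hrs ▸ mem_psums_le_sum hp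
          rcases eq_or_lt_of_le hple with heq | hplt
          · apply hβtM
            have h' : t - β = p := by omega
            rwa [h']
          · exact hok p hp (Finset.mem_filter.mpr ⟨hpM, hplt⟩)
        · rcases List.mem_map.mp hp with ⟨x, hx, rfl⟩
          have hx' : x = g ∨ x = g + β := by
            simp [psums] at hx
            tauto
          intro hpM
          rcases hx' with rfl | rfl
          · apply hβs
            have h' : l.sum - β = r.sum + g := by omega
            rwa [h']
          · apply hsum
            have h' : l.sum = r.sum + (g + β) := by omega
            rwa [h']
    · -- Case 2a
      obtain ⟨r, hr, hok⟩ := ih (n-1) (by omega) (l.erase g) (M.erase d)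
        (by rw [List.length_erase_of_mem hg, hlen])
        (hnd.erase g) (fun x hx => hpos x (List.mem_of_mem_erase hx))
        (by rw [Finset.card_erase_of_mem hdM]; omega)
        h2
      have hrs : r.sum = t := hr.sum_eq
      by_cases hd : d ∈ psums r
      · obtain ⟨r₁, e, r₂, hre, hde⟩ := exists_split hd
        have heR : e ∈ r := by rw [hre]; exact List.mem_append_right _ List.mem_cons_self
        have heE : e ∈ l.erase g := hr.subset heR
        have heg : e < g := hlt e heE
        have hepos : 0 < e := hpos e (List.mem_of_mem_erase heE)
        refine ⟨r₁ ++ g :: e :: r₂, ?_, ?_⟩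
        · calc r₁ ++ g :: e :: r₂ ~ g :: (r₁ ++ e :: r₂) := List.perm_middle
            _ = g :: r := by rw [hre]
            _ ~ g :: l.erase g := hr.cons g
            _ ~ l := (List.perm_cons_erase hg).symm
        · intro p hp
          rw [psums_append] at hp
          rcases List.mem_append.mp hp with hp | hp
          · have hpr : p ∈ psums r := by
              rw [hre, psums_append]; exact List.mem_append_left _ hp
            have hple : p ≤ r₁.sum := mem_psums_le_sum hp
            intro hpM
            exact hok p hpr (Finset.mem_erase.mpr ⟨by omega, hpM⟩)
          · rcases List.mem_map.mp hp with ⟨x, hx, rfl⟩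
            have hxg : g ≤ x := by
              simp only [psums_cons, List.mem_cons, List.mem_map] at hx
              rcases hx with rfl | ⟨y, hy, rfl⟩
              · exact le_refl _
              · exact Nat.le_add_right _ _
            intro hpM
            have := hdmax _ hpM
            omega
      · refine ⟨r ++ [g], ?_, ?_⟩
        · calc r ++ [g] ~ [g] ++ r := List.perm_append_comm
            _ = g :: r := rfl
            _ ~ g :: l.erase g := hr.cons g
            _ ~ l := (List.perm_cons_erase hg).symm
        · intro p hp
          rw [psums_append] at hp
          rcases List.mem_append.mp hp with hp | hp
          · intro hpM
            rcases eq_or_ne p d with rfl | hpd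
            · exact hd hp
            · exact hok p hp (Finset.mem_erase.mpr ⟨hpd, hpM⟩)
          · rcases List.mem_map.mp hp with ⟨x, hx, rfl⟩
            have hx' : x = g := by simpa [psums] using hx
            intro hpM
            apply hsum
            have h' : l.sum = r.sum + x := by omega
            rwa [h']



lemma sum_take_getD (l : List ℕ) (m : ℕ) :
    (l.take m).sum = ∑ i ∈ Finset.range m, l.getD i 0 := by
  induction m with
  | zero => simp
  | succ m ih =>
      rw [Finset.sum_range_succ, ← ih, List.take_succ, List.sum_append]
      congr 1
      cases h : l[m]? with
      | none => simp [List.getD, h]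
      | some v => simp [List.getD, h]

lemma sum_Iic_take {l : List ℕ} {n : ℕ} (hlen : l.length = n) (k : Fin n) (f : Fin n → ℕ)
    (hf : ∀ j : Fin n, f j = l.getD j.val 0) :
    ∑ j ∈ Finset.Iic k, f j = (l.take (k.val + 1)).sum := by
  rw [sum_take_getD]
  rw [Finset.sum_congr rfl (fun j _ => hf j)]
  have h2 : ∑ j ∈ Finset.Iic k, l.getD j.val 0
      = ∑ x ∈ (Finset.Iic k).map Fin.valEmbedding, l.getD x 0 := by
    rw [Finset.sum_map]
    rfl
  rw [h2, Fin.map_valEmbedding_Iic]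
  congr 1
  ext x
  simp [Nat.lt_succ_iff]


end Grasshopper

open Grasshopper in
/-- Generalised Grasshopper problem: the forbidden set `M` is only required to
have cardinality less than `n`, and may contain `0`. -/
theorem grasshopper (n : ℕ) (a : Fin n → ℕ) (M : Finset ℕ)
    (ha_pos : ∀ i, 0 < a i) (ha_inj : Function.Injective a)
    (hM_card : M.card < n) (hS : (∑ i, a i) ∉ M) :
    ∃ σ : Equiv.Perm (Fin n), ∀ k : Fin n, PS a σ k ∉ M := by
  classical
  obtain ⟨l', hperm, hok⟩ := Grasshopper.list_main n (List.ofFn a) M List.length_ofFn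
    (List.nodup_ofFn.mpr ha_inj)
    (by
      intro x hx
      obtain ⟨i, rfl⟩ := List.mem_ofFn.mp hx
      exact ha_pos i)
    hM_card (by rwa [List.sum_ofFn])
  have hnd' : l'.Nodup := hperm.symm.nodup (List.nodup_ofFn.mpr ha_inj)
  have hlen' : l'.length = n := by rw [hperm.length_eq, List.length_ofFn]
  set b : Fin n → ℕ := fun i => l'.get (Fin.cast hlen'.symm i) with hb
  have hbg : ∀ i : Fin n, b i = l'.getD i.val 0 := by
    intro i
    have h : i.val < l'.length := by rw [hlen']; exact i.isLt
    rw [hb, List.getD_eq_getElem _ _ h]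
    simp [List.get_eq_getElem]
  have hbinj : Function.Injective b := by
    intro i j hij
    have hginj := List.nodup_iff_injective_get.mp hnd'
    have h2 := hginj hij
    exact Fin.ext (congrArg Fin.val h2 : (Fin.cast hlen'.symm i).val = _)
  have hrange : Set.range b = Set.range a := by
    ext x
    constructor
    · rintro ⟨i, rfl⟩
      have hmem : b i ∈ l' := List.mem_iff_get.mpr ⟨_, rfl⟩
      exact List.mem_ofFn.mp (hperm.subset hmem)
    · rintro ⟨i, rfl⟩
      have hx : a i ∈ l' := hperm.mem_iff.mpr (List.mem_ofFn.mpr ⟨i, rfl⟩)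
      obtain ⟨k, hk⟩ := List.mem_iff_get.mp hx
      exact ⟨Fin.cast hlen' k, hk⟩
  set σe : Equiv.Perm (Fin n) := (Equiv.ofInjective b hbinj).trans
    ((Equiv.setCongr hrange).trans (Equiv.ofInjective a ha_inj).symm) with hσe
  refine ⟨σe, fun k => ?_⟩
  have hae : ∀ i, a (σe i) = b i := by
    intro i
    show a ((Equiv.ofInjective a ha_inj).symm
      (Equiv.setCongr hrange (Equiv.ofInjective b hbinj i))) = b i
    rw [Equiv.apply_ofInjective_symm ha_inj]
    rfl
  have hps : PS a σe k = (l'.take (k.val + 1)).sum := by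
    unfold PS
    rw [Finset.sum_congr rfl (fun j _ => hae j)]
    exact sum_Iic_take hlen' k b hbg
  rw [hps]
  exact hok _ (take_sum_mem (by rw [hlen']; exact k.isLt))
end
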